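/- Let m ≥ 2, 2 ≤ ℓ ≤ m, and let (f_1, …, f_ℓ) be a (2m, ℓ) bent vectorial function on GF(2^{2m}). Then for any two distinct codewords u, v of C(f_1, …, f_ℓ) of Hamming weight 2^{2m−1} − 2^{m−1}, the cardinality of the intersection of the supports of u and v is one of the three values 2^{2m−2} − 2^{m−2}, 2^{2m−2} − 2^{m−1}, or 2^{2m−2} − 3·2^{m−2}. -/

import Mathlib

set_option synthInstance.maxHeartbeats 1000000
set_option maxHeartbeats 2000000

noncomputable section

/-- The finite field `GF(2^n)` is finite. -/
instance (n : ℕ) : Fintype (GaloisField 2 n) := Fintype.ofFinite _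

/-- The absolute trace map from `GF(2^(2m))` to `GF(2)`. -/
def tr (m : ℕ) (x : GaloisField 2 (2*m)) : ZMod 2 :=
  Algebra.trace (ZMod 2) (GaloisField 2 (2*m)) x

/-- A Boolean function `f : GF(2^(2m)) → GF(2)` is bent if all its Walsh
transform values have absolute value `2^m`. -/
def IsBent (m : ℕ) (f : GaloisField 2 (2*m) → ZMod 2) : Prop :=
  ∀ w : GaloisField 2 (2*m),
    |∑ x : GaloisField 2 (2*m), (-1 : ℤ) ^ ((f x + tr m (w * x)).val)| = 2 ^ m

/-- A tuple `(f 0, …, f (ℓ-1))` of Boolean functions on `GF(2^(2m))` is a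
`(2m, ℓ)` bent vectorial function if every nonzero `GF(2)`-linear combination
of the `f j` is bent. -/
def IsBentVectorial (m ℓ : ℕ) (f : Fin ℓ → GaloisField 2 (2*m) → ZMod 2) : Prop :=
  ∀ a : Fin ℓ → ZMod 2, a ≠ 0 → IsBent m (fun x => ∑ j, a j * f j x)

/-- The binary linear code `C(f 0, …, f (ℓ-1))` of length `2^(2m)` (with
coordinates indexed by `GF(2^(2m))`, a codeword being a function
`GF(2^(2m)) → GF(2)`, i.e. the truth table of a Boolean function), spanned by
the truth tables of the `f j`, the truth tables of the linear functions
`x ↦ tr (w * x)` for all `w`, and the all-one vector. -/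
def code (m ℓ : ℕ) (f : Fin ℓ → GaloisField 2 (2*m) → ZMod 2) :
    Submodule (ZMod 2) (GaloisField 2 (2*m) → ZMod 2) :=
  Submodule.span (ZMod 2)
    (Set.range f ∪ Set.range (fun w => fun x => tr m (w * x)) ∪ {fun _ => (1 : ZMod 2)})

/-- The Hamming weight of a codeword: the number of nonzero coordinates. -/
def wt (m : ℕ) (c : GaloisField 2 (2*m) → ZMod 2) : ℕ :=
  {x | c x ≠ 0}.ncard

/-- The support of a codeword: the set of coordinates where it is nonzero. -/
def supp (m : ℕ) (c : GaloisField 2 (2*m) → ZMod 2) : Set (GaloisField 2 (2*m)) :=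
  {x | c x ≠ 0}

-- auxiliary lemmas

theorem tr_exists_one (m : ℕ) : ∃ y, tr m y = 1 := by
  haveI : Algebra.IsSeparable (ZMod 2) (GaloisField 2 (2*m)) :=
    IsGalois.to_isSeparable
  have h := Algebra.trace_ne_zero (ZMod 2) (GaloisField 2 (2*m))
  by_contra hc
  push_neg at hc
  apply h
  ext y
  have h2 := hc y
  have : tr m y = 0 := by revert h2; generalize tr m y = a; revert a; decide
  exact this

theorem tr_add' (m : ℕ) (x y : GaloisField 2 (2*m)) : tr m (x + y) = tr m x + tr m y :=
  map_add (Algebra.trace (ZMod 2) (GaloisField 2 (2*m))) x y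

theorem tr_zero' (m : ℕ) : tr m 0 = 0 :=
  map_zero (Algebra.trace (ZMod 2) (GaloisField 2 (2*m)))

theorem code_decomp {m ℓ : ℕ} {f : Fin ℓ → GaloisField 2 (2*m) → ZMod 2}
    {c : GaloisField 2 (2*m) → ZMod 2} (hc : c ∈ code m ℓ f) :
    ∃ (a : Fin ℓ → ZMod 2) (w : GaloisField 2 (2*m)) (ε : ZMod 2),
      c = fun x => (∑ j, a j * f j x) + tr m (w*x) + ε := by
  classical
  let M : Submodule (ZMod 2) (GaloisField 2 (2*m) → ZMod 2) :=
  { carrier := {c | ∃ (a : Fin ℓ → ZMod 2) (w : GaloisField 2 (2*m)) (ε : ZMod 2),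
      c = fun x => (∑ j, a j * f j x) + tr m (w*x) + ε}
    add_mem' := by
      rintro c₁ c₂ ⟨a₁, w₁, ε₁, rfl⟩ ⟨a₂, w₂, ε₂, rfl⟩
      refine ⟨a₁ + a₂, w₁ + w₂, ε₁ + ε₂, ?_⟩
      funext x
      simp only [Pi.add_apply, add_mul, tr_add', Finset.sum_add_distrib]
      ring
    zero_mem' := by
      refine ⟨0, 0, 0, ?_⟩
      funext x
      simp [tr_zero']
    smul_mem' := by
      intro c g hg
      have h2 : ∀ c : ZMod 2, c = 0 ∨ c = 1 := by decide
      rcases h2 c with rfl | rfl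
      · refine ⟨0, 0, 0, ?_⟩
        funext x
        simp [tr_zero']
      · simpa [one_smul] using hg }
  have hle : code m ℓ f ≤ M := by
    rw [code, Submodule.span_le]
    rintro g ((⟨j, rfl⟩ | ⟨w, rfl⟩) | rfl)
    · refine ⟨Pi.single j 1, 0, 0, ?_⟩
      funext x
      simp [Pi.single_apply, tr_zero', ite_mul, Finset.sum_ite_eq']
    · refine ⟨0, w, 0, ?_⟩
      funext x
      simp
    · refine ⟨0, 0, 1, ?_⟩
      funext x
      simp [tr_zero']
  exact hle hc

theorem wt_eq_card (m : ℕ) (g : GaloisField 2 (2*m) → ZMod 2) :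
    wt m g = (Finset.univ.filter (fun x => g x ≠ 0)).card := by
  classical
  rw [wt, ← Set.ncard_coe_finset]
  congr 1
  ext x
  simp

theorem sum_sign (m : ℕ) (g : GaloisField 2 (2*m) → ZMod 2) :
    ∑ x, (-1:ℤ)^((g x).val) =
      (Fintype.card (GaloisField 2 (2*m)) : ℤ) - 2 * wt m g := by
  classical
  rw [← Finset.sum_filter_add_sum_filter_not Finset.univ (fun x => g x = 0)]
  have h1 : ∑ x ∈ Finset.univ.filter (fun x => g x = 0), (-1:ℤ)^((g x).val)
      = (Finset.univ.filter (fun x => g x = 0)).card := by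
    rw [Finset.sum_congr rfl (fun x hx => ?_), Finset.sum_const, nsmul_eq_mul, mul_one]
    have : g x = 0 := (Finset.mem_filter.mp hx).2
    rw [this]
    norm_num
  have h2 : ∑ x ∈ Finset.univ.filter (fun x => ¬ g x = 0), (-1:ℤ)^((g x).val)
      = -((Finset.univ.filter (fun x => ¬ g x = 0)).card : ℤ) := by
    rw [Finset.sum_congr rfl (fun x hx => ?_), Finset.sum_const, nsmul_eq_mul, mul_neg_one]
    have hx' : ¬ g x = 0 := (Finset.mem_filter.mp hx).2
    have : (g x).val = 1 := by revert hx'; generalize g x = a; revert a; decide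
    rw [this]
    norm_num
  have h3 := Finset.card_filter_add_card_filter_not (s := Finset.univ)
    (p := fun x : GaloisField 2 (2*m) => g x = 0)
  rw [Finset.card_univ] at h3
  rw [h1, h2, wt_eq_card]
  simp only [ne_eq]
  push_cast
  omega

theorem wt_add_eq (m : ℕ) (u v : GaloisField 2 (2*m) → ZMod 2) :
    wt m (u + v) + 2 * (supp m u ∩ supp m v).ncard = wt m u + wt m v := by
  classical
  have hAB : supp m (u + v) = (supp m u ∪ supp m v) \ (supp m u ∩ supp m v) := by
    ext x
    simp only [supp, Set.mem_setOf_eq, Set.mem_diff, Set.mem_union, Set.mem_inter_iff,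
      Pi.add_apply]
    generalize u x = a
    generalize v x = b
    revert a b
    decide
  have hsub : supp m u ∩ supp m v ⊆ supp m u ∪ supp m v :=
    (Set.inter_subset_left).trans Set.subset_union_left
  have h1 := Set.ncard_diff_add_ncard_of_subset hsub (Set.toFinite _)
  have h2 := Set.ncard_union_add_ncard_inter (supp m u) (supp m v)
    (Set.toFinite _) (Set.toFinite _)
  have hw : wt m (u + v) = ((supp m u ∪ supp m v) \ (supp m u ∩ supp m v)).ncard := by
    rw [wt, ← hAB]; rfl
  have hu : wt m u = (supp m u).ncard := rfl
  have hv : wt m v = (supp m v).ncard := rfl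
  omega

theorem neg_one_pow_add (a b : ZMod 2) :
    (-1:ℤ)^((a+b).val) = (-1:ℤ)^(a.val) * (-1:ℤ)^(b.val) := by
  revert a b; decide

/-- for `2 ≤ ℓ ≤ m`, the supports of two distinct minimum
weight codewords of `C(f_1, …, f_ℓ)` intersect in one of three sizes. -/
theorem stmt_7 (m ℓ : ℕ) (hm : 2 ≤ m) (hℓ1 : 2 ≤ ℓ) (hℓm : ℓ ≤ m)
    (f : Fin ℓ → GaloisField 2 (2*m) → ZMod 2) (hf : IsBentVectorial m ℓ f)
    (u v : GaloisField 2 (2*m) → ZMod 2)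
    (hu : u ∈ code m ℓ f) (hv : v ∈ code m ℓ f)
    (hwu : wt m u = 2^(2*m-1) - 2^(m-1)) (hwv : wt m v = 2^(2*m-1) - 2^(m-1))
    (huv : u ≠ v) :
    (supp m u ∩ supp m v).ncard = 2^(2*m-2) - 2^(m-2) ∨
    (supp m u ∩ supp m v).ncard = 2^(2*m-2) - 2^(m-1) ∨
    (supp m u ∩ supp m v).ncard = 2^(2*m-2) - 3 * 2^(m-2) := by
  classical
  have hcard : Fintype.card (GaloisField 2 (2*m)) = 2^(2*m) := by
    rw [← Nat.card_eq_fintype_card]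
    exact GaloisField.card 2 (2*m) (by omega)
  have huv0 : u + v ≠ 0 := by
    intro h
    apply huv
    funext x
    have hx : u x + v x = 0 := congrFun h x
    revert hx
    generalize u x = a
    generalize v x = b
    revert a b
    decide
  obtain ⟨a, w, ε, hdec⟩ := code_decomp (Submodule.add_mem _ hu hv)
  -- the signed sum over u+v
  have hS : ∑ x, (-1:ℤ)^(((u+v) x).val) = (2^(2*m) : ℤ) - 2 * wt m (u+v) := by
    rw [sum_sign, hcard]
    push_cast
    ring
  set S : ℤ := ∑ x, (-1:ℤ)^(((u+v) x).val) with hSdef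
  have hεall : ∀ e : ZMod 2, (-1:ℤ)^(e.val) = 1 ∨ (-1:ℤ)^(e.val) = -1 := by decide
  have hεcases : (-1:ℤ)^(ε.val) = 1 ∨ (-1:ℤ)^(ε.val) = -1 := hεall ε
  have hfin : S = 2^m ∨ S = 0 ∨ S = -2^m := by
    by_cases ha : a = 0
    · rw [ha] at hdec
      simp only [Pi.zero_apply, zero_mul, Finset.sum_const_zero, zero_add] at hdec
      by_cases hw : w = 0
      · -- u + v is constant; rule out
        exfalso
        rw [hw] at hdec
        simp only [zero_mul, tr_zero', zero_add] at hdec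
        have hε : ε ≠ 0 := by
          intro h0
          apply huv0
          rw [hdec, h0]
          rfl
        have hε1 : ε = 1 := by revert hε; generalize ε = e; revert e; decide
        rw [hε1] at hdec
        -- wt (u+v) = 2^(2m)
        have hwuv : wt m (u+v) = 2^(2*m) := by
          rw [wt_eq_card, ← hcard, ← Finset.card_univ]
          congr 1
          rw [Finset.filter_true_of_mem]
          intro x _
          rw [hdec]
          simp
        have hI := wt_add_eq m u v
        rw [hwu, hwv, hwuv] at hI
        have hple : 2^(m-1) ≤ 2^(2*m-1) := Nat.pow_le_pow_right (by norm_num) (by omega)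
        have hmm : (2:ℕ)^(2*m) = 2^(2*m-1) + 2^(2*m-1) := by
          have h1 : (2:ℕ)^(2*m) = 2^((2*m-1)+1) := by congr 1; omega
          rw [h1, pow_succ]
          ring
        have hpos : 0 < (2:ℕ)^(m-1) := Nat.pow_pos (by norm_num)
        omega
      · -- linear nonzero: sum is zero
        right; left
        obtain ⟨y, hy⟩ := tr_exists_one m
        set z := w⁻¹ * y with hz
        have hwz : w * z = y := by
          rw [hz, ← mul_assoc, mul_inv_cancel₀ hw, one_mul]
        have hT : ∑ x, (-1:ℤ)^((tr m (w*x)).val)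
            = -∑ x, (-1:ℤ)^((tr m (w*x)).val) := by
          conv_lhs => rw [← Fintype.sum_equiv (Equiv.addRight z)
            (fun x => (-1:ℤ)^((tr m (w*(x+z))).val))
            (fun x => (-1:ℤ)^((tr m (w*x)).val)) (fun x => rfl)]
          rw [← Finset.sum_neg_distrib]
          refine Finset.sum_congr rfl (fun x _ => ?_)
          rw [mul_add, tr_add', hwz, hy, neg_one_pow_add]
          have : ((-1:ℤ))^((1 : ZMod 2).val) = -1 := by decide
          rw [this]
          ring
        have hT0 : ∑ x, (-1:ℤ)^((tr m (w*x)).val) = 0 := by linarith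
        have hSe : S = (-1:ℤ)^(ε.val) * ∑ x, (-1:ℤ)^((tr m (w*x)).val) := by
          rw [hSdef, Finset.mul_sum]
          refine Finset.sum_congr rfl (fun x _ => ?_)
          rw [hdec]
          simp only []
          rw [neg_one_pow_add]
          ring
        rw [hSe, hT0, mul_zero]
    · -- bent case
      have hb := hf a ha w
      have hSe : S = (-1:ℤ)^(ε.val) *
          ∑ x, (-1:ℤ)^(((∑ j, a j * f j x) + tr m (w*x)).val) := by
        rw [hSdef, Finset.mul_sum]
        refine Finset.sum_congr rfl (fun x _ => ?_)
        rw [hdec]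
        simp only []
        rw [neg_one_pow_add]
        ring
      have hTb := (abs_eq (by positivity : (0:ℤ) ≤ 2^m)).mp hb
      rcases hTb with h | h <;> rcases hεcases with h2 | h2 <;>
        rw [hSe, h, h2] <;> [left; (right; right); (right; right); left] <;> ring
  -- final arithmetic
  have hI := wt_add_eq m u v
  rw [hwu, hwv] at hI
  have h2m : (2:ℕ)^(2*m) = 16 * (2^(m-2) * 2^(m-2)) := by
    have h1 : (2:ℕ)^(2*m) = 2^((m-2) + ((m-2) + 4)) := by congr 1; omega
    rw [h1, pow_add, pow_add]
    ring
  have h2m1 : (2:ℕ)^(2*m-1) = 8 * (2^(m-2) * 2^(m-2)) := by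
    have h1 : (2:ℕ)^(2*m-1) = 2^((m-2) + ((m-2) + 3)) := by congr 1; omega
    rw [h1, pow_add, pow_add]
    ring
  have h2m2 : (2:ℕ)^(2*m-2) = 4 * (2^(m-2) * 2^(m-2)) := by
    have h1 : (2:ℕ)^(2*m-2) = 2^((m-2) + ((m-2) + 2)) := by congr 1; omega
    rw [h1, pow_add, pow_add]
    ring
  have hmp : (2:ℕ)^m = 4 * 2^(m-2) := by
    have h1 : (2:ℕ)^m = 2^((m-2) + 2) := by congr 1; omega
    rw [h1, pow_add]
    ring
  have hm1 : (2:ℕ)^(m-1) = 2 * 2^(m-2) := by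
    have h1 : (2:ℕ)^(m-1) = 2^((m-2) + 1) := by congr 1; omega
    rw [h1, pow_add]
    ring
  have c1 : ((2:ℤ))^(2*m) = ((2^(2*m) : ℕ) : ℤ) := by push_cast; ring
  have c2 : ((2:ℤ))^m = ((2^m : ℕ) : ℤ) := by push_cast; ring
  rw [hS] at hfin
  rw [c1, c2, h2m, hmp] at hfin
  rw [h2m1, hm1] at hI
  rw [h2m2, hm1]
  have hple : (2:ℕ)^(m-2) ≤ 2^(m-2) * 2^(m-2) :=
    Nat.le_mul_of_pos_left _ (Nat.pow_pos (by norm_num))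
  obtain ⟨K, hK⟩ : ∃ K, (2:ℕ)^(m-2) * 2^(m-2) = K := ⟨_, rfl⟩
  rw [hK] at hfin hI hple ⊢
  omega
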